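/- Let G be a finite directed graph on vertex set V where each vertex v has at most one outgoing edge, defined as follows: fix a metric d on V and a strict total order ≺ on V; the out-neighbor of v (if it exists) is the vertex u ≠ v minimizing d(v,u), with ties broken by taking the ≺-least such u. Then every directed cycle in G has length at most 2. -/

import Mathlib

open Fin.NatCast Fin.CommRing

/-- If `out v` is the nearest vertex to `v` (other than `v`) w.r.t. a symmetric
distance `d`, with ties broken by taking the least vertex in a linear order,
then every directed cycle of the functional graph `out` has length at most 2,
i.e. there is no directed cycle of length `k + 3` for any `k`. -/
theorem stmt_2 {V : Type*} [Fintype V] [LinearOrder V]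
    (d : V → V → ℝ) (hsym : ∀ u v, d u v = d v u)
    (out : V → V)
    (hne : ∀ v, out v ≠ v)
    (hmin : ∀ v u, u ≠ v → d v (out v) ≤ d v u)
    (htie : ∀ v u, u ≠ v → d v u = d v (out v) → out v ≤ u) :
    ∀ (k : ℕ) (v : Fin (k + 3) → V), Function.Injective v →
      ¬ (∀ i : Fin (k + 3), out (v i) = v (i + 1)) := by
  intro k v hinj hcyc
  have hone : (1 : Fin (k + 3)) ≠ 0 := by
    simp [Fin.ext_iff]
  have hne1 : ∀ i : Fin (k + 3), v i ≠ v (i + 1) := by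
    intro i h
    have h' : i = i + 1 := hinj h
    exact hone ((add_eq_left (a := i) (b := 1)).mp h'.symm)
  -- distances along the cycle are non-increasing
  have hstep : ∀ i : Fin (k + 3),
      d (v (i + 1)) (v (i + 1 + 1)) ≤ d (v i) (v (i + 1)) := by
    intro i
    calc d (v (i + 1)) (v (i + 1 + 1))
        = d (v (i + 1)) (out (v (i + 1))) := by rw [hcyc (i + 1)]
      _ ≤ d (v (i + 1)) (v i) := hmin _ _ (hne1 i)
      _ = d (v i) (v (i + 1)) := hsym _ _
  have hiter : ∀ (m : ℕ) (i : Fin (k + 3)),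
      d (v (i + m)) (v (i + m + 1)) ≤ d (v i) (v (i + 1)) := by
    intro m
    induction m with
    | zero => intro i; simp
    | succ m ih =>
        intro i
        have hcast : ((m + 1 : ℕ) : Fin (k + 3)) = (m : Fin (k + 3)) + 1 := by
          push_cast; ring
        rw [hcast, ← add_assoc]
        exact le_trans (hstep (i + m)) (ih i)
  -- hence constant
  have hzero : ((k + 2 : ℕ) : Fin (k + 3)) + 1 = 0 := by
    have : ((k + 2 : ℕ) : Fin (k + 3)) + 1 = ((k + 3 : ℕ) : Fin (k + 3)) := by
      push_cast; ring
    rw [this, Fin.natCast_self]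
  have hconst : ∀ i : Fin (k + 3),
      d (v (i + 1)) (v (i + 1 + 1)) = d (v i) (v (i + 1)) := by
    intro i
    refine le_antisymm (hstep i) ?_
    have h := hiter (k + 2) (i + 1)
    have heq : i + 1 + ((k + 2 : ℕ) : Fin (k + 3)) = i := by
      rw [add_assoc, add_comm (1 : Fin (k+3)), hzero, add_zero]
    rwa [heq] at h
  -- tie-breaking forces v (i+2) ≤ v i
  have horder1 : ∀ i : Fin (k + 3), v (i + 1 + 1) ≤ v i := by
    intro i
    have h := htie (v (i + 1)) (v i) (hne1 i) ?_
    · rwa [hcyc (i + 1)] at h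
    · rw [hcyc (i + 1), hsym]
      exact (hconst i).symm
  have horder : ∀ (m : ℕ) (i : Fin (k + 3)), v (i + (2 * m : ℕ)) ≤ v i := by
    intro m
    induction m with
    | zero => intro i; simp
    | succ m ih =>
        intro i
        have hcast : ((2 * (m + 1) : ℕ) : Fin (k + 3))
            = ((2 * m : ℕ) : Fin (k + 3)) + 1 + 1 := by
          push_cast; ring
        rw [hcast, ← add_assoc, ← add_assoc]
        exact le_trans (horder1 (i + (2 * m : ℕ))) (ih i)
  -- going all the way around gives v 0 = v ↑2
  have h1 : v ((2 : ℕ) : Fin (k + 3)) ≤ v 0 := by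
    have h := horder 1 0
    simpa using h
  have h2 : v 0 ≤ v ((2 : ℕ) : Fin (k + 3)) := by
    have h := horder (k + 2) ((2 : ℕ) : Fin (k + 3))
    have heq : ((2 : ℕ) : Fin (k + 3)) + ((2 * (k + 2) : ℕ) : Fin (k + 3)) = 0 := by
      have : ((2 : ℕ) : Fin (k + 3)) + ((2 * (k + 2) : ℕ) : Fin (k + 3))
          = ((2 * (k + 3) : ℕ) : Fin (k + 3)) := by push_cast; ring
      rw [this]
      simp [Fin.natCast_self]
    rwa [heq] at h
  have heq : v 0 = v ((2 : ℕ) : Fin (k + 3)) := le_antisymm h2 h1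
  have h0 : (0 : Fin (k + 3)) = ((2 : ℕ) : Fin (k + 3)) := hinj heq
  have hval : ((2 : ℕ) : Fin (k + 3)).val = 2 % (k + 3) := Fin.val_natCast _ _
  have : (0 : Fin (k + 3)).val = ((2 : ℕ) : Fin (k + 3)).val := by rw [h0]
  simp [hval, Nat.mod_eq_of_lt (show 2 < k + 3 by omega)] at this
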